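/- Let ι be a finite nonempty type, H a countable type, and π a probability mass function on ι × H with marginal π_M(m) = Σ_h π(m,h) > 0 for every m and conditionals π(h|m) = π(m,h)/π_M(m). For each m ∈ ι let Q_{H|m} be a pmf on H with KL(Q_{H|m}‖π(·|m)) < ∞. Then the minimum over all pmfs Q_M on ι of KL(Q_M ⊗ Q_{H|·}‖π), where (Q_M ⊗ Q_{H|·})(m,h) = Q_M(m)·Q_{H|m}(h), equals −log(Σ_{m∈ι} π_M(m)·exp(−KL(Q_{H|m}‖π(·|m)))). -/

import Mathlib

open scoped ENNReal Classical

/-- Kullback–Leibler divergence between two probability mass functions on a countable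
type: `KL(p‖q) = ∑ x, p x * log (p x / q x) ∈ [0,∞]`, with the conventions
`0 * log (0 / q x) = 0` (automatic since the factor `p x` vanishes) and
`KL(p‖q) = ∞` when `p` is not absolutely continuous with respect to `q`
(or when the series fails to be summable, in which case the sum is genuinely `+∞`
since the negative parts of a relative-entropy series are always summable). -/
noncomputable def klDiv {X : Type*} (p q : PMF X) : ℝ≥0∞ :=
  if (∀ x, q x = 0 → p x = 0) ∧
      Summable (fun x => (p x).toReal * Real.log ((p x).toReal / (q x).toReal))
  then ENNReal.ofReal (∑' x, (p x).toReal * Real.log ((p x).toReal / (q x).toReal))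
  else ⊤

/-- The joint pmf on `ι × H` obtained from a pmf `QM` on `ι` and a family of conditionals
`QH m` on `H`; its value at `(m, h)` is `QM m * QH m h`. -/
noncomputable def jointPMF {ι H : Type*} (QM : PMF ι) (QH : ι → PMF H) : PMF (ι × H) :=
  QM.bind fun m => (QH m).map fun h => (m, h)

lemma pmf_toReal_summable {X : Type*} (p : PMF X) : Summable fun x => (p x).toReal :=
  ENNReal.summable_toReal p.tsum_coe_ne_top

lemma pmf_toReal_tsum {X : Type*} (p : PMF X) : ∑' x, (p x).toReal = 1 := by
  rw [← ENNReal.tsum_toReal_eq fun a => p.apply_ne_top a, p.tsum_coe, ENNReal.toReal_one]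

lemma entropy_term_ge {p q : ℝ} (hp0 : 0 ≤ p) (hq : 0 ≤ q) (habs : q = 0 → p = 0) :
    p - q ≤ p * Real.log (p / q) := by
  rcases eq_or_lt_of_le hp0 with hp | hp
  · have : q = 0 ∨ 0 < q := hq.eq_or_lt.imp Eq.symm id
    rcases this with h | h
    · simp [← hp, h]
    · simp [← hp]; linarith
  · have hq0 : 0 < q := by
      rcases hq.eq_or_lt with h | h
      · exact absurd (habs h.symm) (by linarith)
      · exact h
    have h1 : Real.log (q / p) ≤ q / p - 1 := Real.log_le_sub_one_of_pos (by positivity)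
    have h2 : Real.log (q / p) = - Real.log (p / q) := by
      rw [← Real.log_inv]; congr 1; field_simp
    have h3 : 1 - q / p ≤ Real.log (p / q) := by rw [h2] at h1; linarith
    have h4 := mul_le_mul_of_nonneg_left h3 hp.le
    have h5 : p * (1 - q / p) = p - q := by field_simp
    linarith

lemma gibbs_tsum {X : Type*} {p q : X → ℝ} (hp : ∀ x, 0 ≤ p x) (hq : ∀ x, 0 ≤ q x)
    (hps : Summable p) (hqs : Summable q) (habs : ∀ x, q x = 0 → p x = 0)
    (hsum : Summable fun x => p x * Real.log (p x / q x))
    (hpt : ∑' x, p x = ∑' x, q x) :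
    0 ≤ ∑' x, p x * Real.log (p x / q x) := by
  have h1 : ∑' x, (p x - q x) ≤ ∑' x, p x * Real.log (p x / q x) :=
    Summable.tsum_le_tsum (fun x => entropy_term_ge (hp x) (hq x) (habs x)) (hps.sub hqs) hsum
  rwa [Summable.tsum_sub hps hqs, hpt, sub_self] at h1

lemma prod_summable_tsum {ι H : Type*} [Fintype ι] (F : ι → H → ℝ)
    (hF : ∀ m, Summable (F m)) :
    Summable (fun p : ι × H => F p.1 p.2) ∧
      (∑' p : ι × H, F p.1 p.2) = ∑ m, ∑' h, F m h := by
  classical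
  set G : ι → ι × H → ℝ := fun m p => if p.1 = m then F m p.2 else 0 with hG
  have hinj : ∀ m : ι, Function.Injective (fun h : H => (m, h)) := by
    intro m h1 h2 h; simpa using h
  have hrange : ∀ m : ι, ∀ x ∉ Set.range (fun h : H => (m, h)), G m x = 0 := by
    rintro m ⟨m', h'⟩ hx
    have : m' ≠ m := by
      rintro rfl; exact hx ⟨h', rfl⟩
    simp [hG, this]
  have hcomp : ∀ m, (G m ∘ fun h : H => (m, h)) = F m := by
    intro m; funext h; simp [hG]
  have hGsum : ∀ m, Summable (G m) := by
    intro m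
    rw [← (hinj m).summable_iff (hrange m)]
    rw [hcomp m]; exact hF m
  have hGt : ∀ m, ∑' x, G m x = ∑' h, F m h := by
    intro m
    rw [← (hinj m).tsum_eq]
    · exact tsum_congr fun h => by simp [hG]
    · intro x hx
      by_contra hxr
      exact hx (hrange m x hxr)
  have hpt : (fun p : ι × H => F p.1 p.2) = fun p => ∑ m, G m p := by
    funext p
    simp [hG, Finset.sum_ite_eq' Finset.univ p.1 (fun m => F m p.2)]
  constructor
  · rw [hpt]; exact summable_sum fun m _ => hGsum m
  · rw [hpt, Summable.tsum_finsetSum fun m _ => hGsum m]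
    exact Finset.sum_congr rfl fun m _ => hGt m


lemma jointPMF_apply {ι H : Type*} (QM : PMF ι) (QH : ι → PMF H) (m : ι) (h : H) :
    jointPMF QM QH (m, h) = QM m * QH m h := by
  classical
  rw [jointPMF, PMF.bind_apply]
  have hmap : ∀ m' : ι, ((QH m').map fun h' => (m', h')) (m, h)
      = if m' = m then QH m h else 0 := by
    intro m'
    rw [PMF.map_apply]
    by_cases hm : m' = m
    · subst hm
      simp only [Prod.mk.injEq, true_and]
      rw [tsum_eq_single h]
      · simp
      · intro h' hne; simp [Ne.symm hne]
    · simp [Prod.mk.injEq, Ne.symm hm, hm]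
  rw [tsum_eq_single m]
  · rw [hmap m]; simp
  · intro m' hne; rw [hmap m']; simp [hne]


/-- **Optimal value in Proposition 1 of the paper, discrete version.** Let `π` be a pmf
on `ι × H` with positive marginal `πM` and conditionals `cond m`. For a family `QH m` of
pmfs on `H` with `KL(QH m‖cond m) < ∞`, the minimum over all pmfs `QM` on `ι` of
`KL(QM ⊗ QH‖π)`, where `(QM ⊗ QH) (m, h) = QM m * QH m h`, equals
`- log (∑ m, πM m * exp (- KL(QH m‖cond m)))`. -/
theorem variational_weights_optimal_value {ι H : Type*} [Fintype ι] [Nonempty ι]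
    [Countable H]
    (π : PMF (ι × H))
    (πM : PMF ι) (hπM : ∀ m, πM m = ∑' h, π (m, h))
    (hπM_pos : ∀ m, 0 < πM m)
    (cond : ι → PMF H) (hcond : ∀ m h, cond m h = π (m, h) / πM m)
    (QH : ι → PMF H) (hfin : ∀ m, klDiv (QH m) (cond m) < ⊤) :
    (⨅ QM : PMF ι, klDiv (jointPMF QM QH) π) =
      ENNReal.ofReal
        (- Real.log (∑ m, (πM m).toReal * Real.exp (- (klDiv (QH m) (cond m)).toReal))) := by
  classical
  have hcpos : ∀ m, 0 < (πM m).toReal :=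
    fun m => ENNReal.toReal_pos (hπM_pos m).ne' (πM.apply_ne_top m)
  -- the KL condition holds for each m
  have hcondKL : ∀ m, (∀ h, cond m h = 0 → QH m h = 0) ∧
      Summable (fun h => (QH m h).toReal *
        Real.log ((QH m h).toReal / (cond m h).toReal)) := by
    intro m
    by_contra hcon
    have h1 := hfin m
    rw [klDiv, if_neg hcon] at h1
    exact absurd h1 (lt_irrefl _)
  set S : ι → ℝ := fun m => ∑' h, (QH m h).toReal *
    Real.log ((QH m h).toReal / (cond m h).toReal) with hS_def
  have hKL : ∀ m, klDiv (QH m) (cond m) = ENNReal.ofReal (S m) := by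
    intro m; rw [klDiv, if_pos (hcondKL m)]
  have habs' : ∀ m h, (cond m h).toReal = 0 → (QH m h).toReal = 0 := by
    intro m h hb
    rcases (ENNReal.toReal_eq_zero_iff _).mp hb with h0 | h0
    · rw [(hcondKL m).1 h h0, ENNReal.toReal_zero]
    · exact absurd h0 ((cond m).apply_ne_top h)
  have hS0 : ∀ m, 0 ≤ S m := by
    intro m
    exact gibbs_tsum (fun h => ENNReal.toReal_nonneg) (fun h => ENNReal.toReal_nonneg)
      (pmf_toReal_summable (QH m)) (pmf_toReal_summable (cond m)) (habs' m)
      ((hcondKL m).2) (by rw [pmf_toReal_tsum, pmf_toReal_tsum])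
  have hKtoReal : ∀ m, (klDiv (QH m) (cond m)).toReal = S m := by
    intro m; rw [hKL m, ENNReal.toReal_ofReal (hS0 m)]
  set w : ι → ℝ := fun m => (πM m).toReal * Real.exp (- S m) with hw_def
  have hwpos : ∀ m, 0 < w m := fun m => mul_pos (hcpos m) (Real.exp_pos _)
  set W : ℝ := ∑ m, w m with hW_def
  have hWpos : 0 < W := Finset.sum_pos (fun m _ => hwpos m) Finset.univ_nonempty
  -- factorization of π
  have hπfac : ∀ m h, π (m, h) = πM m * cond m h := by
    intro m h
    rw [hcond m h, ENNReal.mul_div_cancel (hπM_pos m).ne' (πM.apply_ne_top m)]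
  have hπtoReal : ∀ m h, (π (m, h)).toReal = (πM m).toReal * (cond m h).toReal := by
    intro m h; rw [hπfac m h, ENNReal.toReal_mul]
  -- sums of PMF values over fintype
  have hsumQM : ∀ QM : PMF ι, ∑ m, (QM m).toReal = 1 := by
    intro QM
    have h1 := QM.tsum_coe
    rw [tsum_fintype] at h1
    have h2 := congrArg ENNReal.toReal h1
    rwa [ENNReal.toReal_sum (fun m _ => QM.apply_ne_top m), ENNReal.toReal_one] at h2
  -- main computation of the KL divergence of the joint
  have hcomp : ∀ QM : PMF ι, klDiv (jointPMF QM QH) π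
      = ENNReal.ofReal (∑ m, (QM m).toReal * Real.log ((QM m).toReal / w m)) := by
    intro QM
    set F : ι → H → ℝ := fun m h =>
      ((QM m).toReal * (QH m h).toReal) *
        Real.log (((QM m).toReal * (QH m h).toReal) /
          ((πM m).toReal * (cond m h).toReal)) with hF_def
    have hFpt : ∀ m, F m = fun h =>
        ((QM m).toReal * Real.log ((QM m).toReal / (πM m).toReal)) * (QH m h).toReal
          + (QM m).toReal * ((QH m h).toReal *
            Real.log ((QH m h).toReal / (cond m h).toReal)) := by
      intro m
      funext h
      rcases eq_or_lt_of_le (ENNReal.toReal_nonneg : (0:ℝ) ≤ (QH m h).toReal) with ha | ha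
      · simp [hF_def, ← ha]
      · rcases eq_or_lt_of_le (ENNReal.toReal_nonneg : (0:ℝ) ≤ (QM m).toReal) with hqm | hqm
        · simp [hF_def, ← hqm]
        · have hb : 0 < (cond m h).toReal := by
            rcases (ENNReal.toReal_nonneg : (0:ℝ) ≤ (cond m h).toReal).eq_or_lt with h0 | h0
            · exact absurd (habs' m h h0.symm) ha.ne'
            · exact h0
          have hsplit : ((QM m).toReal * (QH m h).toReal) /
              ((πM m).toReal * (cond m h).toReal)
              = ((QM m).toReal / (πM m).toReal) * ((QH m h).toReal / (cond m h).toReal) :=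
            mul_div_mul_comm _ _ _ _
          simp only [hF_def]
          rw [hsplit, Real.log_mul (div_pos hqm (hcpos m)).ne' (div_pos ha hb).ne']
          ring
    have hFsummable : ∀ m, Summable (F m) := by
      intro m
      rw [hFpt m]
      exact (((pmf_toReal_summable (QH m)).mul_left _)).add (((hcondKL m).2).mul_left _)
    have hFtsum : ∀ m, ∑' h, F m h
        = (QM m).toReal * Real.log ((QM m).toReal / (πM m).toReal)
          + (QM m).toReal * S m := by
      intro m
      rw [hFpt m, Summable.tsum_add ((pmf_toReal_summable (QH m)).mul_left _)
        (((hcondKL m).2).mul_left _), tsum_mul_left, tsum_mul_left, pmf_toReal_tsum,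
        mul_one]
    have hfun : (fun x : ι × H => ((jointPMF QM QH) x).toReal *
        Real.log (((jointPMF QM QH) x).toReal / (π x).toReal))
        = fun x : ι × H => F x.1 x.2 := by
      funext x
      rcases x with ⟨m, h⟩
      rw [jointPMF_apply, ENNReal.toReal_mul]
      simp only [hF_def]
      rw [hπtoReal m h]
    have hcondJ : (∀ x : ι × H, π x = 0 → jointPMF QM QH x = 0) ∧
        Summable (fun x : ι × H => ((jointPMF QM QH) x).toReal *
          Real.log (((jointPMF QM QH) x).toReal / (π x).toReal)) := by
      constructor
      · rintro ⟨m, h⟩ hx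
        rw [jointPMF_apply]
        have hb : cond m h = 0 := by
          rw [hπfac m h] at hx
          rcases mul_eq_zero.mp hx with h0 | h0
          · exact absurd h0 (hπM_pos m).ne'
          · exact h0
        rw [(hcondKL m).1 h hb, mul_zero]
      · rw [hfun]
        exact (prod_summable_tsum F hFsummable).1
    rw [klDiv, if_pos hcondJ, hfun, (prod_summable_tsum F hFsummable).2]
    congr 1
    refine Finset.sum_congr rfl fun m _ => ?_
    rw [hFtsum m]
    rcases eq_or_lt_of_le (ENNReal.toReal_nonneg : (0:ℝ) ≤ (QM m).toReal) with hqm | hqm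
    · simp [← hqm]
    · have hww : w m = (πM m).toReal * Real.exp (- S m) := rfl
      rw [hww, Real.log_div hqm.ne' (hcpos m).ne',
        Real.log_div hqm.ne' (mul_pos (hcpos m) (Real.exp_pos _)).ne',
        Real.log_mul (hcpos m).ne' (Real.exp_pos _).ne', Real.log_exp]
      ring
  -- lower bound for any QM
  have hΦge : ∀ QM : PMF ι,
      - Real.log W ≤ ∑ m, (QM m).toReal * Real.log ((QM m).toReal / w m) := by
    intro QM
    have hr1 : ∑ m, w m / W = 1 := by
      rw [← Finset.sum_div, ← hW_def, div_self hWpos.ne']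
    have key : ∀ m, (QM m).toReal * Real.log ((QM m).toReal / w m)
        = (QM m).toReal * Real.log ((QM m).toReal / (w m / W))
          - (QM m).toReal * Real.log W := by
      intro m
      rcases eq_or_lt_of_le (ENNReal.toReal_nonneg : (0:ℝ) ≤ (QM m).toReal) with hqm | hqm
      · simp [← hqm]
      · rw [Real.log_div hqm.ne' (hwpos m).ne',
          Real.log_div hqm.ne' (div_pos (hwpos m) hWpos).ne',
          Real.log_div (hwpos m).ne' hWpos.ne']
        ring
    rw [Finset.sum_congr rfl fun m _ => key m, Finset.sum_sub_distrib,
      ← Finset.sum_mul, hsumQM QM, one_mul]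
    have hgibbs : (0:ℝ) ≤ ∑ m, (QM m).toReal * Real.log ((QM m).toReal / (w m / W)) := by
      have h1 : ∑ m, ((QM m).toReal - w m / W)
          ≤ ∑ m, (QM m).toReal * Real.log ((QM m).toReal / (w m / W)) :=
        Finset.sum_le_sum fun m _ => entropy_term_ge ENNReal.toReal_nonneg
          (div_pos (hwpos m) hWpos).le
          (fun h0 => absurd h0 (div_pos (hwpos m) hWpos).ne')
      rwa [Finset.sum_sub_distrib, hsumQM QM, hr1, sub_self] at h1
    linarith
  -- the optimal QM
  have hsum1 : ∑ m, ENNReal.ofReal (w m / W) = 1 := by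
    rw [← ENNReal.ofReal_sum_of_nonneg (fun m _ => (div_pos (hwpos m) hWpos).le),
      ← Finset.sum_div, ← hW_def, div_self hWpos.ne', ENNReal.ofReal_one]
  set QMstar : PMF ι := PMF.ofFintype _ hsum1 with hQMstar_def
  have hstar_apply : ∀ m, (QMstar m).toReal = w m / W := by
    intro m
    rw [hQMstar_def, PMF.ofFintype_apply,
      ENNReal.toReal_ofReal (div_pos (hwpos m) hWpos).le]
  have hΦstar : ∑ m, (QMstar m).toReal * Real.log ((QMstar m).toReal / w m)
      = - Real.log W := by
    have hterm : ∀ m, (QMstar m).toReal * Real.log ((QMstar m).toReal / w m)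
        = (w m / W) * (- Real.log W) := by
      intro m
      rw [hstar_apply m]
      congr 1
      have h1 : (w m / W) / w m = 1 / W := by
        rw [div_div, mul_comm W (w m), ← div_div, div_self (hwpos m).ne']
      rw [h1, one_div, Real.log_inv]
    rw [Finset.sum_congr rfl fun m _ => hterm m, ← Finset.sum_mul, ← Finset.sum_div,
      ← hW_def, div_self hWpos.ne', one_mul]
  have hRHS : ∑ m, (πM m).toReal * Real.exp (- (klDiv (QH m) (cond m)).toReal) = W := by
    rw [hW_def]
    exact Finset.sum_congr rfl fun m _ => by rw [hKtoReal m]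
  rw [hRHS]
  apply le_antisymm
  · exact (iInf_le _ QMstar).trans (le_of_eq (by rw [hcomp QMstar, hΦstar]))
  · exact le_iInf fun QM => by
      rw [hcomp QM]; exact ENNReal.ofReal_le_ofReal (hΦge QM)
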